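/- arXiv:1802.04761 — 3 statements merged into one kernel-verified Lean document; each statement's English description precedes it below -/
import Mathlib

section
/- Let 0 < a < π and let p₁, q₁, p₂, q₂ ∈ L²(0, π) be functions such that p₂ and q₂ vanish a.e. on (0, a) and p₁, q₁ vanish a.e. on (a, π). Then for all integers 0 ≤ j ≤ n with n ≥ 1, on the interval (0, 2a) (i.e., for a.e. t with 0 < t < min(2a, π)) one has (p₁ + p₂)^{*j} * (q₁ + q₂)^{*(n−j)}(t) = (p₁^{*j} * q₁^{*(n−j)})(t) + j (p₁^{*(j−1)} * q₁^{*(n−j)} * p₂)(t) + (n−j)(p₁^{*j} * q₁^{*(n−j−1)} * q₂)(t), where terms with negative convolution exponents are interpreted as zero and f^{*0} * g := g. -/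
open MeasureTheory Real Set

/-- Convolution on (0, π): (f * g)(x) = ∫₀ˣ f(t) g(x−t) dt. -/
noncomputable def conv (f g : ℝ → ℂ) : ℝ → ℂ :=
  fun x => ∫ t in (0:ℝ)..x, f t * g (x - t)

/-- `convPowApp f n g = f^{*n} * g`, with `f^{*0}` acting as the convolution identity. -/
noncomputable def convPowApp (f : ℝ → ℂ) : ℕ → (ℝ → ℂ) → (ℝ → ℂ)
  | 0, g => g
  | n + 1, g => conv f (convPowApp f n g)

/-- `pq f g j k = f^{*j} * g^{*k}` for `j + k ≥ 1`
    (`f^{*0}` acting as the convolution identity). -/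
noncomputable def pq (f g : ℝ → ℂ) (j k : ℕ) : ℝ → ℂ :=
  if k = 0 then convPowApp f (j - 1) f else convPowApp f j (convPowApp g (k - 1) g)

/-- The L²(0, π) measure. -/
noncomputable def μπ : Measure ℝ := volume.restrict (Set.Ioo 0 π)

open Convolution Filter

/-! ### Auxiliary: convolution over ℝ -/

noncomputable abbrev mulC : ℂ →L[ℝ] ℂ →L[ℝ] ℂ := ContinuousLinearMap.mul ℝ ℂ

noncomputable def sconv (f g : ℝ → ℂ) : ℝ → ℂ := f ⋆[mulC] g

/-- right-nested star power -/
noncomputable def sPow (f : ℝ → ℂ) : ℕ → (ℝ → ℂ) → (ℝ → ℂ)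
  | 0, g => g
  | n + 1, g => sconv f (sPow f n g)

noncomputable def spq (f g : ℝ → ℂ) (j k : ℕ) : ℝ → ℂ :=
  if k = 0 then sPow f (j - 1) f else sPow f j (sPow g (k - 1) g)

lemma sconv_def (f g : ℝ → ℂ) (x : ℝ) : sconv f g x = ∫ t, f t * g (x - t) := rfl

lemma sconv_comm (f g : ℝ → ℂ) : sconv f g = sconv g f := by
  funext x
  rw [sconv_def, sconv_def, ← integral_sub_left_eq_self (fun t => f t * g (x - t)) volume x]
  simp [mul_comm, sub_sub_cancel]

lemma sconv_integrable {f g : ℝ → ℂ} (hf : Integrable f) (hg : Integrable g) :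
    Integrable (sconv f g) := hf.integrable_convolution mulC hg

lemma sconv_congr {f f' g g' : ℝ → ℂ} (hf : f =ᵐ[volume] f') (hg : g =ᵐ[volume] g') :
    sconv f g = sconv f' g' := convolution_congr mulC hf hg

lemma ae_assoc {f g k : ℝ → ℂ} (hf : Integrable f) (hg : Integrable g) (hk : Integrable k) :
    ∀ᵐ x ∂(volume : Measure ℝ), sconv (sconv f g) k x = sconv f (sconv g k) x := by
  have h1 : ∀ᵐ y ∂(volume : Measure ℝ), ConvolutionExistsAt f g y mulC volume :=
    hf.ae_convolution_exists mulC hg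
  have h2 : ∀ᵐ x ∂(volume : Measure ℝ),
      ConvolutionExistsAt (fun x => ‖g x‖) (fun x => ‖k x‖) x (ContinuousLinearMap.mul ℝ ℝ)
        volume :=
    hg.norm.ae_convolution_exists _ hk.norm
  have h3 : Integrable ((fun x => ‖g x‖) ⋆[ContinuousLinearMap.mul ℝ ℝ] fun x => ‖k x‖) :=
    hg.norm.integrable_convolution _ hk.norm
  have h4 : ∀ᵐ x₀ ∂(volume : Measure ℝ),
      ConvolutionExistsAt (fun x => ‖f x‖)
        ((fun x => ‖g x‖) ⋆[ContinuousLinearMap.mul ℝ ℝ] fun x => ‖k x‖) x₀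
        (ContinuousLinearMap.mul ℝ ℝ) volume :=
    hf.norm.ae_convolution_exists _ h3
  filter_upwards [h4] with x₀ hx₀
  exact convolution_assoc mulC mulC mulC mulC (fun x y z => mul_assoc x y z)
    hf.aestronglyMeasurable hg.aestronglyMeasurable hk.aestronglyMeasurable h1 h2 hx₀

/-! ### support predicates -/

/-- support strictly above c -/
def W (c : ℝ) (f : ℝ → ℂ) : Prop := ∀ x, f x ≠ 0 → c < x

lemma W.mono {c d : ℝ} {f : ℝ → ℂ} (h : W c f) (hdc : d ≤ c) : W d f :=
  fun x hx => lt_of_le_of_lt hdc (h x hx)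

lemma W.zero_of_le {c : ℝ} {f : ℝ → ℂ} (h : W c f) {x : ℝ} (hx : x ≤ c) : f x = 0 := by
  by_contra hfx; exact absurd (h x hfx) (not_lt.2 hx)

lemma W.add {c : ℝ} {f g : ℝ → ℂ} (hf : W c f) (hg : W c g) : W c (f + g) := by
  intro x hx
  by_contra h
  exact hx (by simp [Pi.add_apply, hf.zero_of_le (not_lt.1 h), hg.zero_of_le (not_lt.1 h)])

lemma W.smul {c : ℝ} {z : ℂ} {f : ℝ → ℂ} (hf : W c f) : W c (z • f) := by
  intro x hx
  refine hf x fun h0 => hx (by simp [Pi.smul_apply, h0])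

lemma W_sconv {c d : ℝ} {f g : ℝ → ℂ} (hf : W c f) (hg : W d g) : W (c + d) (sconv f g) := by
  intro x hx
  have : ∃ t, f t * g (x - t) ≠ 0 := by
    by_contra h
    push_neg at h
    have : sconv f g x = ∫ t, f t * g (x - t) := rfl
    exact hx (by rw [this]; simp [h])
  obtain ⟨t, ht⟩ := this
  have h1 : c < t := hf t fun h => ht (by simp [h])
  have h2 : d < x - t := hg (x - t) fun h => ht (by simp [h])
  linarith

lemma W.sPow {c d : ℝ} {f g : ℝ → ℂ} (hc : 0 ≤ c) (hf : W c f) (hg : W d g) (n : ℕ) :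
    W d (sPow f n g) := by
  induction n with
  | zero => exact hg
  | succ n ih => exact ((W_sconv hf ih)).mono (by linarith)

lemma sPow_integrable {f g : ℝ → ℂ} (hf : Integrable f) (hg : Integrable g) (n : ℕ) :
    Integrable (sPow f n g) := by
  induction n with
  | zero => exact hg
  | succ n ih => exact hf.integrable_convolution mulC ih

lemma sPow_succ_inner (f h : ℝ → ℂ) (n : ℕ) : sPow f n (sconv f h) = sPow f (n + 1) h := by
  induction n with
  | zero => rfl
  | succ n ih => show sconv f (sPow f n (sconv f h)) = _; rw [ih]; rfl

lemma sPow_congr {f g g' : ℝ → ℂ} (hg : g =ᵐ[volume] g') (n : ℕ) :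
    sPow f n g =ᵐ[volume] sPow f n g' := by
  induction n with
  | zero => exact hg
  | succ n ih =>
    exact Filter.EventuallyEq.of_eq (sconv_congr (Filter.EventuallyEq.refl _ _) ih)

/-! ### swap and localized congruence -/

lemma swap_ae {f g Y : ℝ → ℂ} (hf : Integrable f) (hg : Integrable g) (hY : Integrable Y) :
    sconv f (sconv g Y) =ᵐ[volume] sconv g (sconv f Y) := by
  have h1 := ae_assoc hf hg hY
  have h2 := ae_assoc hg hf hY
  filter_upwards [h1, h2] with x e1 e2
  rw [← e1, sconv_comm f g, e2]

lemma sPow_swap_ae {f g Y : ℝ → ℂ} (hf : Integrable f) (hg : Integrable g) (hY : Integrable Y)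
    (k : ℕ) : sconv f (sPow g k Y) =ᵐ[volume] sPow g k (sconv f Y) := by
  induction k with
  | zero => rfl
  | succ k ih =>
    calc sconv f (sconv g (sPow g k Y))
        =ᵐ[volume] sconv g (sconv f (sPow g k Y)) :=
          swap_ae hf hg (sPow_integrable hg hY k)
      _ =ᵐ[volume] sconv g (sPow g k (sconv f Y)) := EventuallyEq.of_eq
          (sconv_congr (EventuallyEq.refl _ _) ih)

/-- localized congruence: if `X = X'` a.e. on `(0, m)` and both are supported in `(0,∞)`,
then convolving with any `(0,∞)`-supported `f` gives equal values at every `x ≤ m`. -/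
lemma sconv_cong_loc {m : ℝ} {f X X' : ℝ → ℂ} (hf : W 0 f) (hX : W 0 X) (hX' : W 0 X')
    (h : ∀ᵐ t ∂(volume : Measure ℝ), t ∈ Ioo 0 m → X t = X' t) {x : ℝ} (hx : x ≤ m) :
    sconv f X x = sconv f X' x := by
  have hpull : ∀ᵐ t ∂(volume : Measure ℝ), x - t ∈ Ioo 0 m → X (x - t) = X' (x - t) :=
    (quasiMeasurePreserving_sub_left_of_right_invariant volume x).ae h
  show (f ⋆[mulC] X) x = (f ⋆[mulC] X') x
  refine integral_congr_ae ?_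
  filter_upwards [hpull] with t ht
  show f t * X (x - t) = f t * X' (x - t)
  by_cases hft : f t = 0
  · simp [hft]
  · have h0t : 0 < t := hf t hft
    by_cases hxt : x - t ≤ 0
    · rw [hX.zero_of_le hxt, hX'.zero_of_le hxt]
    · push_neg at hxt
      rw [ht ⟨hxt, by linarith⟩]

/-! ### a.e. bilinearity -/

lemma add_sconv_ae {f f' g : ℝ → ℂ} (hf : Integrable f) (hf' : Integrable f')
    (hg : Integrable g) :
    ∀ᵐ x ∂(volume : Measure ℝ), sconv (f + f') g x = sconv f g x + sconv f' g x := by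
  filter_upwards [hf.ae_convolution_exists mulC hg, hf'.ae_convolution_exists mulC hg]
    with x h1 h2
  exact h1.add_distrib h2

lemma sconv_add_ae {f g g' : ℝ → ℂ} (hf : Integrable f) (hg : Integrable g)
    (hg' : Integrable g') :
    ∀ᵐ x ∂(volume : Measure ℝ), sconv f (g + g') x = sconv f g x + sconv f g' x := by
  filter_upwards [hf.ae_convolution_exists mulC hg, hf.ae_convolution_exists mulC hg']
    with x h1 h2
  exact h1.distrib_add h2

lemma sconv_smul {f g : ℝ → ℂ} (z : ℂ) : sconv f (z • g) = z • sconv f g := by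
  funext x
  have h1 : sconv f (z • g) x = ∫ t, f t * (z • g) (x - t) := rfl
  have h2 : (z • sconv f g) x = z * ∫ t, f t * g (x - t) := rfl
  simp only [h1, h2, Pi.smul_apply, smul_eq_mul, ← integral_const_mul]
  congr 1
  funext t
  ring

/-! ### the main expansion in the ⋆-world -/

lemma mainQ {a m : ℝ} {B V : ℝ → ℂ} (ha : 0 ≤ a) (hm : m ≤ a + a)
    (hB : Integrable B) (hV : Integrable V) (hB0 : W 0 B) (hVa : W a V) :
    ∀ k : ℕ, ∀ᵐ x ∂(volume : Measure ℝ), x ∈ Ioo 0 m →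
      sPow (B + V) k (B + V) x = sPow B k B x + ((k : ℂ) + 1) * sPow B k V x := by
  have hV0 : W 0 V := hVa.mono ha
  have hQ0 : W 0 (B + V) := hB0.add hV0
  have hQint : Integrable (B + V) := hB.add hV
  intro k
  induction k with
  | zero =>
    refine Eventually.of_forall fun x _ => ?_
    simp [sPow]
  | succ k ih =>
    have hSk : Integrable (sPow B k B) := sPow_integrable hB hB k
    have hTk : Integrable (sPow B k V) := sPow_integrable hB hV k
    set X' : ℝ → ℂ := sPow B k B + ((k : ℂ) + 1) • sPow B k V with hX'def
    have hX'int : Integrable X' := hSk.add (hTk.smul _)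
    have hWX : W 0 (sPow (B + V) k (B + V)) := W.sPow le_rfl hQ0 hQ0 k
    have hWS : W 0 (sPow B k B) := W.sPow le_rfl hB0 hB0 k
    have hWT : W 0 (sPow B k V) := W.sPow le_rfl hB0 hV0 k
    have hWTa : W a (sPow B k V) := W.sPow le_rfl hB0 hVa k
    have hWX' : W 0 X' := hWS.add hWT.smul
    have hcong : ∀ᵐ t ∂(volume : Measure ℝ), t ∈ Ioo 0 m →
        sPow (B + V) k (B + V) t = X' t := by
      filter_upwards [ih] with t ht hmem
      simpa [hX'def] using ht hmem
    have e2 := sconv_add_ae hQint hSk (hTk.smul ((k : ℂ) + 1))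
    have e3 := add_sconv_ae hB hV hSk
    have e4 := add_sconv_ae hB hV (hTk.smul ((k : ℂ) + 1))
    have e5 : sconv V (sPow B k B) =ᵐ[volume] sPow B (k + 1) V := by
      calc sconv V (sPow B k B) =ᵐ[volume] sPow B k (sconv V B) := sPow_swap_ae hV hB hB k
        _ = sPow B (k + 1) V := by rw [sconv_comm V B, sPow_succ_inner]
    filter_upwards [e2, e3, e4, e5] with x h2 h3 h4 h5 hx
    have hxle : x ≤ m := le_of_lt hx.2
    have step1 : sPow (B + V) (k + 1) (B + V) x = sconv (B + V) X' x :=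
      sconv_cong_loc hQ0 hWX hWX' hcong hxle
    have hzero : sconv V (sPow B k V) x = 0 :=
      (W_sconv hVa hWTa).zero_of_le (by linarith [hx.2])
    have hsmulB : sconv B (((k : ℂ) + 1) • sPow B k V) x
        = ((k : ℂ) + 1) * sPow B (k + 1) V x := by
      rw [sconv_smul]; rfl
    have hsmulV : sconv V (((k : ℂ) + 1) • sPow B k V) x = 0 := by
      rw [sconv_smul]
      show ((k : ℂ) + 1) * sconv V (sPow B k V) x = 0
      rw [hzero, mul_zero]
    have hBS : sconv B (sPow B k B) x = sPow B (k + 1) B x := rfl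
    rw [step1, h2, h3, h4, hBS, hsmulB, hsmulV, h5]
    push_cast
    ring

@[simp] lemma sPow_zero (f g : ℝ → ℂ) : sPow f 0 g = g := rfl

lemma spq_succ (f g : ℝ → ℂ) {j k : ℕ} (h : 1 ≤ j + k) :
    spq f g (j + 1) k = sconv f (spq f g j k) := by
  unfold spq
  rcases k with _ | k'
  · obtain ⟨j', rfl⟩ : ∃ j', j = j' + 1 := ⟨j - 1, by omega⟩
    simp only [if_pos rfl]
    rfl
  · simp only [if_neg (Nat.succ_ne_zero k')]
    rfl

lemma spq_integrable {f g : ℝ → ℂ} (hf : Integrable f) (hg : Integrable g) (j k : ℕ) :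
    Integrable (spq f g j k) := by
  unfold spq; split
  · exact sPow_integrable hf hf _
  · exact sPow_integrable hf (sPow_integrable hg hg _) _

lemma spq_W0 {f g : ℝ → ℂ} (hf : W 0 f) (hg : W 0 g) (j k : ℕ) : W 0 (spq f g j k) := by
  unfold spq; split
  · exact W.sPow le_rfl hf hf _
  · exact W.sPow le_rfl hf (W.sPow le_rfl hg hg _) _

lemma coef_shift {A Z : ℝ → ℂ} (j : ℕ) (x : ℝ) :
    (j : ℂ) * sconv A (sPow A (j - 1) Z) x = (j : ℂ) * sPow A j Z x := by
  rcases j with _ | j'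
  · simp
  · rfl

lemma sconv_U_spq {A B U : ℝ → ℂ} (hA : Integrable A) (hB : Integrable B)
    (hU : Integrable U) {j k : ℕ} (h : 1 ≤ j + k) :
    sconv U (spq A B j k) =ᵐ[volume] sPow A j (sPow B k U) := by
  unfold spq
  rcases k with _ | k'
  · obtain ⟨j', rfl⟩ : ∃ j', j = j' + 1 := ⟨j - 1, by omega⟩
    simp only [if_pos rfl]
    calc sconv U (sPow A j' A) =ᵐ[volume] sPow A j' (sconv U A) := sPow_swap_ae hU hA hA j'
      _ = sPow A (j' + 1) (sPow B 0 U) := by rw [sconv_comm U A, sPow_succ_inner]; rfl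
  · simp only [if_neg (Nat.succ_ne_zero k')]
    have h1 : sconv U (sPow A j (sPow B k' B)) =ᵐ[volume]
        sPow A j (sconv U (sPow B k' B)) :=
      sPow_swap_ae hU hA (sPow_integrable hB hB k') j
    have h2 : sconv U (sPow B k' B) =ᵐ[volume] sPow B (k' + 1) U := by
      calc sconv U (sPow B k' B) =ᵐ[volume] sPow B k' (sconv U B) := sPow_swap_ae hU hB hB k'
        _ = sPow B (k' + 1) U := by rw [sconv_comm U B, sPow_succ_inner]
    exact h1.trans (sPow_congr h2 j)

lemma mainJK {a m : ℝ} {A B U V : ℝ → ℂ} (ha : 0 ≤ a) (hm : m ≤ a + a)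
    (hA : Integrable A) (hB : Integrable B) (hU : Integrable U) (hV : Integrable V)
    (hA0 : W 0 A) (hB0 : W 0 B) (hUa : W a U) (hVa : W a V) :
    ∀ j k : ℕ, 1 ≤ j + k → ∀ᵐ x ∂(volume : Measure ℝ), x ∈ Ioo 0 m →
      spq (A + U) (B + V) j k x = spq A B j k x
        + (j : ℂ) * sPow A (j - 1) (sPow B k U) x
        + (k : ℂ) * sPow A j (sPow B (k - 1) V) x := by
  have hU0 : W 0 U := hUa.mono ha
  have hV0 : W 0 V := hVa.mono ha
  have hP0 : W 0 (A + U) := hA0.add hU0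
  have hQ0 : W 0 (B + V) := hB0.add hV0
  have hPint : Integrable (A + U) := hA.add hU
  have hQint : Integrable (B + V) := hB.add hV
  intro j
  induction j with
  | zero =>
    intro k hk
    obtain ⟨k', rfl⟩ : ∃ k', k = k' + 1 := ⟨k - 1, by omega⟩
    filter_upwards [mainQ ha hm hB hV hB0 hVa k'] with x hx hmem
    have e1 : spq (A + U) (B + V) 0 (k' + 1) x = sPow (B + V) k' (B + V) x := by
      unfold spq; simp only [if_neg (Nat.succ_ne_zero k')]; rfl
    have e2 : spq A B 0 (k' + 1) x = sPow B k' B x := by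
      unfold spq; simp only [if_neg (Nat.succ_ne_zero k')]; rfl
    rw [e1, e2, hx hmem]
    simp only [sPow_zero, Nat.add_sub_cancel, Nat.cast_zero, zero_mul, Nat.cast_add,
      Nat.cast_one]
    ring
  | succ j ihj =>
    intro k hk
    by_cases hjk : 1 ≤ j + k
    case neg =>
      have hj0 : j = 0 := by omega
      have hk0 : k = 0 := by omega
      subst hj0; subst hk0
      refine Eventually.of_forall fun x _ => ?_
      have e1 : spq (A + U) (B + V) 1 0 x = A x + U x := by
        unfold spq; simp [sPow]
      have e2 : spq A B 1 0 x = A x := by unfold spq; simp [sPow]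
      rw [e1, e2]
      norm_num [sPow_zero]
    case pos =>
      set S : ℝ → ℂ := spq A B j k with hSdef
      set T₁ : ℝ → ℂ := sPow A (j - 1) (sPow B k U) with hT₁def
      set T₂ : ℝ → ℂ := sPow A j (sPow B (k - 1) V) with hT₂def
      have hSint : Integrable S := spq_integrable hA hB j k
      have hT₁int : Integrable T₁ := sPow_integrable hA (sPow_integrable hB hU k) (j - 1)
      have hT₂int : Integrable T₂ := sPow_integrable hA (sPow_integrable hB hV (k - 1)) j
      set X' : ℝ → ℂ := S + (j : ℂ) • T₁ + (k : ℂ) • T₂ with hX'def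
      have hX'int : Integrable X' := (hSint.add (hT₁int.smul _)).add (hT₂int.smul ((k : ℕ) : ℂ))
      have hWS : W 0 S := spq_W0 hA0 hB0 j k
      have hWT₁ : W a T₁ := W.sPow le_rfl hA0 (W.sPow le_rfl hB0 hUa k) (j - 1)
      have hWT₂ : W a T₂ := W.sPow le_rfl hA0 (W.sPow le_rfl hB0 hVa (k - 1)) j
      have hWX : W 0 (spq (A + U) (B + V) j k) := spq_W0 hP0 hQ0 j k
      have hWX' : W 0 X' := (hWS.add (hWT₁.mono ha).smul).add (hWT₂.mono ha).smul
      have hcong : ∀ᵐ t ∂(volume : Measure ℝ), t ∈ Ioo 0 m →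
          spq (A + U) (B + V) j k t = X' t := by
        filter_upwards [ihj k hjk] with t ht hmem
        simpa [hX'def] using ht hmem
      have e2 := add_sconv_ae hA hU hX'int
      have e3 := sconv_add_ae hA (hSint.add (hT₁int.smul ((j : ℕ) : ℂ)))
        (hT₂int.smul ((k : ℕ) : ℂ))
      have e3' := sconv_add_ae hA hSint (hT₁int.smul ((j : ℕ) : ℂ))
      have e4 := sconv_add_ae hU (hSint.add (hT₁int.smul ((j : ℕ) : ℂ)))
        (hT₂int.smul ((k : ℕ) : ℂ))
      have e4' := sconv_add_ae hU hSint (hT₁int.smul ((j : ℕ) : ℂ))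
      have e5 := sconv_U_spq hA hB hU hjk
      filter_upwards [e2, e3, e3', e4, e4', e5] with x h2 h3 h3' h4 h4' h5 hmem
      have hxle : x ≤ m := le_of_lt hmem.2
      have step1 : spq (A + U) (B + V) (j + 1) k x
          = sconv (A + U) (spq (A + U) (B + V) j k) x := by
        rw [spq_succ _ _ hjk]
      have step2 : sconv (A + U) (spq (A + U) (B + V) j k) x = sconv (A + U) X' x :=
        sconv_cong_loc hP0 hWX hWX' hcong hxle
      have hA_S : sconv A S x = spq A B (j + 1) k x := by rw [spq_succ _ _ hjk]
      have hzero1 : sconv U ((j : ℂ) • T₁) x = 0 := by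
        rw [sconv_smul]
        show (j : ℂ) * sconv U T₁ x = 0
        rw [(W_sconv hUa hWT₁).zero_of_le (by linarith [hmem.2]), mul_zero]
      have hzero2 : sconv U ((k : ℂ) • T₂) x = 0 := by
        rw [sconv_smul]
        show (k : ℂ) * sconv U T₂ x = 0
        rw [(W_sconv hUa hWT₂).zero_of_le (by linarith [hmem.2]), mul_zero]
      have hAT₁ : sconv A ((j : ℂ) • T₁) x = (j : ℂ) * sPow A j (sPow B k U) x := by
        rw [sconv_smul]
        show (j : ℂ) * sconv A (sPow A (j - 1) (sPow B k U)) x = _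
        exact coef_shift j x
      have hAT₂ : sconv A ((k : ℂ) • T₂) x
          = (k : ℂ) * sPow A (j + 1) (sPow B (k - 1) V) x := by
        rw [sconv_smul]; rfl
      rw [step1, step2, h2, h3, h3', h4, h4', hA_S, hAT₁, hAT₂, hzero1, hzero2, h5]
      show spq A B (j + 1) k x + (j : ℂ) * sPow A j (sPow B k U) x
            + (k : ℂ) * sPow A (j + 1) (sPow B (k - 1) V) x
            + (sPow A j (sPow B k U) x + 0 + 0)
          = spq A B (j + 1) k x + ((j + 1 : ℕ) : ℂ) * sPow A ((j + 1) - 1) (sPow B k U) x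
            + (k : ℂ) * sPow A (j + 1) (sPow B (k - 1) V) x
      have hj1 : ((j + 1 : ℕ) : ℕ) - 1 = j := by omega
      rw [hj1]
      push_cast
      ring

/-! ### the bridge between `conv` and `sconv` -/

lemma conv_zero_of_nonpos {f h : ℝ → ℂ} (hf : W 0 f) {x : ℝ} (hx : x ≤ 0) :
    conv f h x = 0 := by
  unfold conv
  rw [intervalIntegral.integral_of_ge hx]
  rw [setIntegral_eq_zero_of_forall_eq_zero fun t ht => by
    rw [hf.zero_of_le ht.2, zero_mul]]
  simp

lemma sconv_zero_of_nonpos {f g : ℝ → ℂ} (hf : W 0 f) (hg : W 0 g) {x : ℝ} (hx : x ≤ 0) :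
    sconv f g x = 0 := by
  rw [sconv_def]
  refine integral_eq_zero_of_ae (Eventually.of_forall fun t => ?_)
  show f t * g (x - t) = 0
  by_cases hft : f t = 0
  · simp [hft]
  · rw [hg.zero_of_le (by linarith [hf t hft]), mul_zero]

lemma convPow_W0 {f g : ℝ → ℂ} (hf : W 0 f) (hg : W 0 g) (n : ℕ) :
    W 0 (convPowApp f n g) := by
  induction n with
  | zero => exact hg
  | succ n ih =>
    intro x hx
    by_contra h
    exact hx (conv_zero_of_nonpos hf (not_lt.1 h))

lemma bridge {f g g' : ℝ → ℂ} (hf : ∀ t, f t ≠ 0 → t ∈ Ioo 0 π) (hg' : W 0 g')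
    (hgg' : ∀ x ∈ Iic π, g x = g' x) (n : ℕ) :
    ∀ x ∈ Iic π, convPowApp f n g x = sPow f n g' x := by
  have hf0 : W 0 f := fun t ht => (hf t ht).1
  induction n with
  | zero => exact hgg'
  | succ n ih =>
    intro x hx
    show conv f (convPowApp f n g) x = sconv f (sPow f n g') x
    by_cases hx0 : x ≤ 0
    · rw [conv_zero_of_nonpos hf0 hx0,
        sconv_zero_of_nonpos hf0 (W.sPow le_rfl hf0 hg' n) hx0]
    · push_neg at hx0
      unfold conv
      rw [intervalIntegral.integral_of_le hx0.le]
      have e1 : ∫ t in Ioc 0 x, f t * convPowApp f n g (x - t)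
          = ∫ t in Ioc 0 x, f t * sPow f n g' (x - t) := by
        refine setIntegral_congr_fun measurableSet_Ioc fun t ht => ?_
        rw [ih (x - t) (by simp only [mem_Iic]; linarith [ht.1, mem_Iic.1 hx])]
      have e2 : ∫ t in Ioc 0 x, f t * sPow f n g' (x - t)
          = ∫ t, f t * sPow f n g' (x - t) := by
        refine setIntegral_eq_integral_of_forall_compl_eq_zero fun t ht => ?_
        rw [mem_Ioc] at ht
        rcases not_and_or.1 ht with h | h
        · rw [hf0.zero_of_le (not_lt.1 h), zero_mul]
        · rw [(W.sPow le_rfl hf0 hg' n).zero_of_le (by linarith [not_le.1 h]), mul_zero]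
      rw [e1, e2]
      rfl

lemma pq_bridge {f g : ℝ → ℂ} (hf : ∀ t, f t ≠ 0 → t ∈ Ioo 0 π)
    (hg : ∀ t, g t ≠ 0 → t ∈ Ioo 0 π) (j k : ℕ) :
    ∀ x ∈ Ioc 0 π, pq f g j k x = spq f g j k x := by
  intro x hx
  have hxI : x ∈ Iic π := mem_Iic.2 hx.2
  have hf0 : W 0 f := fun t ht => (hf t ht).1
  have hg0 : W 0 g := fun t ht => (hg t ht).1
  unfold pq spq
  rcases k with _ | k'
  · simp only [if_pos rfl]
    exact bridge hf hf0 (fun _ _ => rfl) (j - 1) x hxI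
  · simp only [if_neg (Nat.succ_ne_zero k')]
    refine bridge hf (W.sPow le_rfl hg0 hg0 _) ?_ j x hxI
    exact bridge hg hg0 (fun _ _ => rfl) (Nat.succ k' - 1)

/-! ### a.e. congruence for `conv` on (0, π) -/

lemma convCong {f f' g g' : ℝ → ℂ} (hf : f =ᵐ[μπ] f') (hg : g =ᵐ[μπ] g')
    {x : ℝ} (hx : x ∈ Ioc 0 π) : conv f g x = conv f' g' x := by
  have hf1 : ∀ᵐ t ∂(volume : Measure ℝ), t ∈ Ioo 0 π → f t = f' t :=
    (ae_restrict_iff' measurableSet_Ioo).1 hf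
  have hg1 : ∀ᵐ t ∂(volume : Measure ℝ), t ∈ Ioo 0 π → g t = g' t :=
    (ae_restrict_iff' measurableSet_Ioo).1 hg
  have hgp : ∀ᵐ t ∂(volume : Measure ℝ), x - t ∈ Ioo 0 π → g (x - t) = g' (x - t) :=
    (quasiMeasurePreserving_sub_left_of_right_invariant volume x).ae hg1
  have hne : ∀ᵐ t ∂(volume : Measure ℝ), t ≠ x := by
    refine ae_iff.2 ?_
    simpa [not_not, Set.setOf_eq_eq_singleton] using measure_singleton x
  unfold conv
  rw [intervalIntegral.integral_of_le hx.1.le, intervalIntegral.integral_of_le hx.1.le]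
  refine integral_congr_ae ?_
  filter_upwards [ae_restrict_of_ae hf1, ae_restrict_of_ae hgp, ae_restrict_of_ae hne,
    ae_restrict_mem measurableSet_Ioc] with t h1 h2 h3 hmem
  have ht1 : 0 < t := hmem.1
  have ht2 : t < x := lt_of_le_of_ne hmem.2 h3
  rw [h1 ⟨ht1, lt_of_lt_of_le ht2 hx.2⟩, h2 ⟨by linarith, by linarith [hx.2]⟩]

lemma convPow_congr {f f' g g' : ℝ → ℂ} (hf : f =ᵐ[μπ] f') (hg : g =ᵐ[μπ] g') (n : ℕ) :
    convPowApp f n g =ᵐ[μπ] convPowApp f' n g' := by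
  induction n with
  | zero => exact hg
  | succ n ih =>
    refine (ae_restrict_iff' measurableSet_Ioo).2 (Eventually.of_forall fun x hx => ?_)
    exact convCong hf ih ⟨hx.1, hx.2.le⟩

lemma pq_congr {f f' g g' : ℝ → ℂ} (hf : f =ᵐ[μπ] f') (hg : g =ᵐ[μπ] g') (j k : ℕ) :
    pq f g j k =ᵐ[μπ] pq f' g' j k := by
  unfold pq
  rcases k with _ | k'
  · simp only [if_pos rfl]
    exact convPow_congr hf hf _
  · simp only [if_neg (Nat.succ_ne_zero k')]
    exact convPow_congr hf (convPow_congr hg hg _) _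

/-! ### The theorem -/

theorem stmt_3 (a : ℝ) (ha : 0 < a) (ha' : a < π)
    (p₁ q₁ p₂ q₂ : ℝ → ℂ)
    (hp₁ : MemLp p₁ 2 μπ) (hq₁ : MemLp q₁ 2 μπ)
    (hp₂ : MemLp p₂ 2 μπ) (hq₂ : MemLp q₂ 2 μπ)
    (hp₂0 : ∀ᵐ x ∂(volume.restrict (Set.Ioo 0 a)), p₂ x = 0)
    (hq₂0 : ∀ᵐ x ∂(volume.restrict (Set.Ioo 0 a)), q₂ x = 0)
    (hp₁0 : ∀ᵐ x ∂(volume.restrict (Set.Ioo a π)), p₁ x = 0)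
    (hq₁0 : ∀ᵐ x ∂(volume.restrict (Set.Ioo a π)), q₁ x = 0)
    (n j : ℕ) (hn : 1 ≤ n) (hj : j ≤ n) :
    ∀ᵐ t ∂(volume.restrict (Set.Ioo 0 (min (2 * a) π))),
      pq (p₁ + p₂) (q₁ + q₂) j (n - j) t =
        pq p₁ q₁ j (n - j) t
        + (j : ℂ) * convPowApp p₁ (j - 1) (convPowApp q₁ (n - j) p₂) t
        + ((n : ℂ) - (j : ℂ)) * convPowApp p₁ j (convPowApp q₁ (n - j - 1) q₂) t := by
  haveI : IsFiniteMeasure μπ := by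
    constructor
    rw [μπ, Measure.restrict_apply_univ]
    exact measure_Ioo_lt_top
  set k := n - j with hkdef
  have hjk : 1 ≤ j + k := by omega
  set A := (Ioc (0:ℝ) a).indicator p₁ with hAdef
  set B := (Ioc (0:ℝ) a).indicator q₁ with hBdef
  set U := (Ioo a π).indicator p₂ with hUdef
  set V := (Ioo a π).indicator q₂ with hVdef
  have hsub1 : Ioc (0:ℝ) a ⊆ Ioo 0 π := fun t ht => ⟨ht.1, lt_of_le_of_lt ht.2 ha'⟩
  have hsub2 : Ioo a π ⊆ Ioo 0 π := fun t ht => ⟨lt_trans ha ht.1, ht.2⟩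
  have hp₁i : IntegrableOn p₁ (Ioo 0 π) volume := hp₁.integrable one_le_two
  have hq₁i : IntegrableOn q₁ (Ioo 0 π) volume := hq₁.integrable one_le_two
  have hp₂i : IntegrableOn p₂ (Ioo 0 π) volume := hp₂.integrable one_le_two
  have hq₂i : IntegrableOn q₂ (Ioo 0 π) volume := hq₂.integrable one_le_two
  have hAint : Integrable A := (hp₁i.mono_set hsub1).integrable_indicator measurableSet_Ioc
  have hBint : Integrable B := (hq₁i.mono_set hsub1).integrable_indicator measurableSet_Ioc
  have hUint : Integrable U := (hp₂i.mono_set hsub2).integrable_indicator measurableSet_Ioo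
  have hVint : Integrable V := (hq₂i.mono_set hsub2).integrable_indicator measurableSet_Ioo
  -- a.e. identification of the cleaned functions
  have hne : ∀ᵐ x ∂(volume : Measure ℝ), x ≠ a := by
    refine ae_iff.2 ?_
    simpa [not_not, Set.setOf_eq_eq_singleton] using measure_singleton a
  have hp₁ae : p₁ =ᵐ[μπ] A := by
    have h0 : ∀ᵐ x ∂(volume : Measure ℝ), x ∈ Ioo a π → p₁ x = 0 :=
      (ae_restrict_iff' measurableSet_Ioo).1 hp₁0
    refine (ae_restrict_iff' measurableSet_Ioo).2 ?_
    filter_upwards [h0] with x hx hmem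
    by_cases hxa : x ≤ a
    · have hmm : x ∈ Ioc (0:ℝ) a := ⟨hmem.1, hxa⟩
      simp [hAdef, Set.indicator_apply, hmm]
    · have hmm : x ∉ Ioc (0:ℝ) a := fun hc => hxa hc.2
      simp [hAdef, Set.indicator_apply, hmm, hx ⟨not_le.1 hxa, hmem.2⟩]
  have hq₁ae : q₁ =ᵐ[μπ] B := by
    have h0 : ∀ᵐ x ∂(volume : Measure ℝ), x ∈ Ioo a π → q₁ x = 0 :=
      (ae_restrict_iff' measurableSet_Ioo).1 hq₁0
    refine (ae_restrict_iff' measurableSet_Ioo).2 ?_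
    filter_upwards [h0] with x hx hmem
    by_cases hxa : x ≤ a
    · have hmm : x ∈ Ioc (0:ℝ) a := ⟨hmem.1, hxa⟩
      simp [hBdef, Set.indicator_apply, hmm]
    · have hmm : x ∉ Ioc (0:ℝ) a := fun hc => hxa hc.2
      simp [hBdef, Set.indicator_apply, hmm, hx ⟨not_le.1 hxa, hmem.2⟩]
  have hp₂ae : p₂ =ᵐ[μπ] U := by
    have h0 : ∀ᵐ x ∂(volume : Measure ℝ), x ∈ Ioo 0 a → p₂ x = 0 :=
      (ae_restrict_iff' measurableSet_Ioo).1 hp₂0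
    refine (ae_restrict_iff' measurableSet_Ioo).2 ?_
    filter_upwards [h0, hne] with x hx hxa hmem
    by_cases h : a < x
    · have hmm : x ∈ Ioo a π := ⟨h, hmem.2⟩
      simp [hUdef, Set.indicator_apply, hmm]
    · have hmm : x ∉ Ioo a π := fun hc => h hc.1
      simp [hUdef, Set.indicator_apply, hmm, hx ⟨hmem.1, lt_of_le_of_ne (not_lt.1 h) hxa⟩]
  have hq₂ae : q₂ =ᵐ[μπ] V := by
    have h0 : ∀ᵐ x ∂(volume : Measure ℝ), x ∈ Ioo 0 a → q₂ x = 0 :=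
      (ae_restrict_iff' measurableSet_Ioo).1 hq₂0
    refine (ae_restrict_iff' measurableSet_Ioo).2 ?_
    filter_upwards [h0, hne] with x hx hxa hmem
    by_cases h : a < x
    · have hmm : x ∈ Ioo a π := ⟨h, hmem.2⟩
      simp [hVdef, Set.indicator_apply, hmm]
    · have hmm : x ∉ Ioo a π := fun hc => h hc.1
      simp [hVdef, Set.indicator_apply, hmm, hx ⟨hmem.1, lt_of_le_of_ne (not_lt.1 h) hxa⟩]
  -- supports
  have hAsupp : ∀ t, A t ≠ 0 → t ∈ Ioo 0 π := fun t ht =>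
    hsub1 (mem_of_indicator_ne_zero ht)
  have hBsupp : ∀ t, B t ≠ 0 → t ∈ Ioo 0 π := fun t ht =>
    hsub1 (mem_of_indicator_ne_zero ht)
  have hUsupp : ∀ t, U t ≠ 0 → t ∈ Ioo 0 π := fun t ht =>
    hsub2 (mem_of_indicator_ne_zero ht)
  have hVsupp : ∀ t, V t ≠ 0 → t ∈ Ioo 0 π := fun t ht =>
    hsub2 (mem_of_indicator_ne_zero ht)
  have hA0 : W 0 A := fun t ht => (hAsupp t ht).1
  have hB0 : W 0 B := fun t ht => (hBsupp t ht).1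
  have hUa : W a U := fun t ht => (mem_of_indicator_ne_zero ht).1
  have hVa : W a V := fun t ht => (mem_of_indicator_ne_zero ht).1
  have hU0 : W 0 U := hUa.mono ha.le
  have hV0 : W 0 V := hVa.mono ha.le
  have hPsupp : ∀ t, (A + U) t ≠ 0 → t ∈ Ioo 0 π := by
    intro t ht
    by_cases h : A t = 0
    · refine hUsupp t fun h2 => ht ?_
      show A t + U t = 0
      rw [h, h2, add_zero]
    · exact hAsupp t h
  have hQsupp : ∀ t, (B + V) t ≠ 0 → t ∈ Ioo 0 π := by
    intro t ht
    by_cases h : B t = 0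
    · refine hVsupp t fun h2 => ht ?_
      show B t + V t = 0
      rw [h, h2, add_zero]
    · exact hBsupp t h
  -- main expansion
  have hm2a : min (2 * a) π ≤ a + a := le_trans (min_le_left _ _) (by linarith)
  have main := mainJK (m := min (2 * a) π) ha.le hm2a hAint hBint hUint hVint
    hA0 hB0 hUa hVa j k hjk
  -- congruence facts
  have c1 : pq (p₁ + p₂) (q₁ + q₂) j k =ᵐ[μπ] pq (A + U) (B + V) j k :=
    pq_congr (hp₁ae.add hp₂ae) (hq₁ae.add hq₂ae) j k
  have c2 : pq p₁ q₁ j k =ᵐ[μπ] pq A B j k := pq_congr hp₁ae hq₁ae j k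
  have c3 : convPowApp p₁ (j - 1) (convPowApp q₁ k p₂)
      =ᵐ[μπ] convPowApp A (j - 1) (convPowApp B k U) :=
    convPow_congr hp₁ae (convPow_congr hq₁ae hp₂ae k) (j - 1)
  have c4 : convPowApp p₁ j (convPowApp q₁ (k - 1) q₂)
      =ᵐ[μπ] convPowApp A j (convPowApp B (k - 1) V) :=
    convPow_congr hp₁ae (convPow_congr hq₁ae hq₂ae (k - 1)) j
  have hsubm : Ioo (0:ℝ) (min (2 * a) π) ⊆ Ioo 0 π :=
    Ioo_subset_Ioo le_rfl (min_le_right _ _)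
  have c1' : ∀ᵐ x ∂(volume.restrict (Ioo (0:ℝ) π)),
      pq (p₁ + p₂) (q₁ + q₂) j k x = pq (A + U) (B + V) j k x := c1
  have c2' : ∀ᵐ x ∂(volume.restrict (Ioo (0:ℝ) π)),
      pq p₁ q₁ j k x = pq A B j k x := c2
  have c3' : ∀ᵐ x ∂(volume.restrict (Ioo (0:ℝ) π)),
      convPowApp p₁ (j - 1) (convPowApp q₁ k p₂) x
        = convPowApp A (j - 1) (convPowApp B k U) x := c3
  have c4' : ∀ᵐ x ∂(volume.restrict (Ioo (0:ℝ) π)),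
      convPowApp p₁ j (convPowApp q₁ (k - 1) q₂) x
        = convPowApp A j (convPowApp B (k - 1) V) x := c4
  filter_upwards [ae_restrict_of_ae_restrict_of_subset hsubm c1',
    ae_restrict_of_ae_restrict_of_subset hsubm c2',
    ae_restrict_of_ae_restrict_of_subset hsubm c3',
    ae_restrict_of_ae_restrict_of_subset hsubm c4',
    ae_restrict_of_ae main,
    ae_restrict_mem measurableSet_Ioo] with x e1 e2 e3 e4 emain hmem
  have hxIoc : x ∈ Ioc (0:ℝ) π := ⟨hmem.1, le_trans (le_of_lt hmem.2) (min_le_right _ _)⟩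
  have hxIic : x ∈ Iic π := mem_Iic.2 hxIoc.2
  have hcast : ((k : ℕ) : ℂ) = (n : ℂ) - (j : ℂ) := by
    rw [hkdef]
    push_cast [Nat.cast_sub hj]
    ring
  rw [e1, pq_bridge hPsupp hQsupp j k x hxIoc, emain hmem, e2, e3, e4,
    pq_bridge hAsupp hBsupp j k x hxIoc,
    bridge hAsupp (W.sPow le_rfl hB0 hU0 k) (bridge hBsupp hU0 (fun _ _ => rfl) k)
      (j - 1) x hxIic,
    bridge hAsupp (W.sPow le_rfl hB0 hV0 (k - 1)) (bridge hBsupp hV0 (fun _ _ => rfl) (k - 1))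
      j x hxIic, ← hcast]
end

section
/- Fix m ∈ ℕ, m ≥ 2, and let b = π/m. The system of vector functions {(sin(smt), cos(smt))ᵀ}_{s ∈ ℤ} is an orthogonal basis of the Hilbert space H = L²(0, b) ⊕ L²(0, b) with the inner product (g, h) = ∫₀ᵇ (conj(g₁) h₁ + conj(g₂) h₂) dt. -/
open MeasureTheory Real Set AddCircle


lemma circleKey {T : ℝ} [hT : Fact (0 < T)] {F : AddCircle T → ℂ}
    (hF : MemLp F 2 (haarAddCircle : Measure (AddCircle T)))
    (h : ∀ n : ℤ, fourierCoeff F n = 0) :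
    F =ᵐ[(haarAddCircle : Measure (AddCircle T))] 0 := by
  have hco : fourierCoeff (↑(hF.toLp F) : AddCircle T → ℂ) = fourierCoeff F := by
    funext i
    refine integral_congr_ae ?_
    filter_upwards [hF.coeFn_toLp] with x hx
    rw [hx]
  have hrepr : fourierBasis.repr (hF.toLp F) = 0 := by
    ext i
    rw [fourierBasis_repr, hco, h i]
    rfl
  have h2 : hF.toLp F = 0 := by
    apply fourierBasis.repr.injective
    simpa using hrepr
  exact hF.coeFn_toLp.symm.trans ((Lp.eq_zero_iff_ae_eq_zero).mp h2)

lemma master {T : ℝ} [hT : Fact (0 < T)] (a : ℝ) (f : ℝ → ℂ)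
    (hsm : StronglyMeasurable f)
    (hf : MemLp f 2 (volume.restrict (Ioc a (a + T))))
    (h0 : ∀ n : ℤ, ∫ t in Ioc a (a + T), (fourier (-n) (t : AddCircle T) : ℂ) * f t = 0) :
    ∀ᵐ t ∂(volume.restrict (Ioc a (a + T))), f t = 0 := by
  set F : AddCircle T → ℂ := liftIoc T a f with hFdef
  have hFsm : StronglyMeasurable F :=
    hsm.comp_measurable
      (measurable_subtype_coe.comp (measurableEquivIoc T a).measurable)
  have hmp := AddCircle.measurePreserving_mk T a
  have hcomp : (fun x : ℝ => F ↑x) =ᵐ[volume.restrict (Ioc a (a + T))] f := by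
    filter_upwards [ae_restrict_mem measurableSet_Ioc] with x hx
    exact liftIoc_coe_apply hx
  have hFvol : MemLp F 2 (volume : Measure (AddCircle T)) := by
    rw [← hmp.map_eq]
    rw [memLp_map_measure_iff (hmp.map_eq ▸ hFsm.aestronglyMeasurable)
      hmp.measurable.aemeasurable]
    exact hf.ae_eq hcomp.symm
  have hT0 : (ENNReal.ofReal T) ≠ 0 := by simp [hT.out]
  have hhaar : (haarAddCircle : Measure (AddCircle T))
      = (ENNReal.ofReal T)⁻¹ • (volume : Measure (AddCircle T)) := by
    rw [volume_eq_smul_haarAddCircle, smul_smul,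
      ENNReal.inv_mul_cancel hT0 ENNReal.ofReal_ne_top, one_smul]
  have hFh : MemLp F 2 (haarAddCircle : Measure (AddCircle T)) := by
    rw [hhaar]
    exact hFvol.smul_measure (by simp [hT0])
  have hcoef : ∀ n : ℤ, fourierCoeff F n = 0 := by
    intro n
    rw [fourierCoeff_eq_intervalIntegral F n a,
      intervalIntegral.integral_of_le (by linarith [hT.out])]
    have heq : ∫ x in Ioc a (a + T), (fourier (-n) (x : AddCircle T) : ℂ) • F ↑x
        = ∫ x in Ioc a (a + T), (fourier (-n) (x : AddCircle T) : ℂ) * f x := by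
      refine setIntegral_congr_fun measurableSet_Ioc fun x hx => ?_
      rw [hFdef, liftIoc_coe_apply hx, smul_eq_mul]
    rw [heq, h0 n, smul_zero]
  have hae : F =ᵐ[(volume : Measure (AddCircle T))] 0 := by
    rw [volume_eq_smul_haarAddCircle]
    exact Measure.ae_smul_measure (circleKey hFh hcoef) _
  have hpull : (fun x : ℝ => F ↑x) =ᵐ[volume.restrict (Ioc a (a + T))] 0 := by
    rw [← hmp.map_eq] at hae
    exact ae_eq_comp hmp.measurable.aemeasurable hae
  exact hcomp.symm.trans hpull

/-- Odd/even extension lemma: if `G ∈ L²(0,b)` is orthogonal to all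
`exp(-iπnt/b) + σ exp(iπnt/b)`, with `σ = ±1`, then `G = 0` a.e. -/
lemma oddEven {b : ℝ} (hbpos : 0 < b) (σ : ℂ)
    (G : ℝ → ℂ) (hGsm : StronglyMeasurable G)
    (hG : MemLp G 2 (volume.restrict (Ioo 0 b)))
    (hvan : ∀ n : ℤ, ∫ t in Ioo 0 b,
      (Complex.exp (((-(π / b * n * t)) : ℝ) * Complex.I)
        + σ * Complex.exp (((π / b * n * t) : ℝ) * Complex.I)) * G t = 0) :
    ∀ᵐ t ∂(volume.restrict (Ioo 0 b)), G t = 0 := by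
  set T : ℝ := 2 * b with hTdef
  haveI hT : Fact (0 < T) := ⟨by positivity⟩
  have hIocT : -b + T = b := by rw [hTdef]; ring
  set E : ℤ → ℝ → ℂ := fun n t => Complex.exp (((-(π / b * n * t)) : ℝ) * Complex.I)
    with hEdef
  set f : ℝ → ℂ := fun t => if 0 < t then G t else σ * G (-t) with hfdef
  have hfsm : StronglyMeasurable f :=
    StronglyMeasurable.ite (measurableSet_lt measurable_const measurable_id)
      hGsm ((hGsm.comp_measurable measurable_neg).const_mul σ)
  have hsub : Ioo 0 b ⊆ Ioc (-b) b := fun x hx => ⟨by linarith [hx.1], hx.2.le⟩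
  have hresIoc : volume.restrict (Ioc 0 b) = volume.restrict (Ioo 0 b) :=
    Measure.restrict_congr_set Ioo_ae_eq_Ioc.symm
  have hresIco : volume.restrict (Ico 0 b) = volume.restrict (Ioo 0 b) :=
    Measure.restrict_congr_set Ioo_ae_eq_Ico.symm
  have hpre : (fun t : ℝ => -t) ⁻¹' (Ico 0 b) = Ioc (-b) 0 := by
    ext x
    simp only [mem_preimage, mem_Ico, mem_Ioc]
    constructor <;> (intro h; constructor <;> linarith [h.1, h.2])
  have hnegmp : MeasurePreserving (fun t : ℝ => -t)
      (volume.restrict (Ioc (-b) 0)) (volume.restrict (Ico 0 b)) := by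
    have := (Measure.measurePreserving_neg (volume : Measure ℝ)).restrict_preimage
      (measurableSet_Ico (a := (0:ℝ)) (b := b))
    rwa [hpre] at this
  have hfIoc0b : MemLp f 2 (volume.restrict (Ioc 0 b)) := by
    rw [hresIoc]
    refine hG.ae_eq ?_
    filter_upwards [ae_restrict_mem measurableSet_Ioo] with t ht
    simp [hfdef, ht.1]
  have hfIocneg : MemLp f 2 (volume.restrict (Ioc (-b) 0)) := by
    have h1 : MemLp G 2 (volume.restrict (Ico 0 b)) := by rw [hresIco]; exact hG
    have h2 : MemLp (G ∘ (fun t : ℝ => -t)) 2 (volume.restrict (Ioc (-b) 0)) :=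
      h1.comp_measurePreserving hnegmp
    refine (h2.const_mul σ).ae_eq ?_
    filter_upwards [ae_restrict_mem measurableSet_Ioc] with t ht
    have hnt : ¬ (0 < t) := not_lt.mpr ht.2
    simp [hfdef, hnt, Function.comp]
  have hsplitset : Ioc (-b) b = Ioc (-b) 0 ∪ Ioc 0 b :=
    (Ioc_union_Ioc_eq_Ioc (by linarith) (by linarith)).symm
  have hressum : volume.restrict (Ioc (-b) b)
      = volume.restrict (Ioc (-b) 0) + volume.restrict (Ioc 0 b) := by
    rw [hsplitset, Measure.restrict_union (Ioc_disjoint_Ioc_of_le le_rfl) measurableSet_Ioc]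
  have hfmem : MemLp f 2 (volume.restrict (Ioc (-b) b)) := by
    rw [hressum, memLp_two_iff_integrable_sq_norm hfsm.aestronglyMeasurable]
    exact ((memLp_two_iff_integrable_sq_norm hfsm.aestronglyMeasurable).mp hfIocneg).add_measure
      ((memLp_two_iff_integrable_sq_norm hfsm.aestronglyMeasurable).mp hfIoc0b)
  -- continuity and bounds of E
  have hEcont : ∀ n : ℤ, Continuous (E n) := by
    intro n
    apply Complex.continuous_exp.comp
    exact (Complex.continuous_ofReal.comp (by continuity)).mul continuous_const
  have hEbdd : ∀ n : ℤ, ∃ C, ∀ t : ℝ, ‖E n t‖ ≤ C := by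
    intro n
    refine ⟨1, fun t => ?_⟩
    rw [hEdef]
    exact le_of_eq (Complex.norm_exp_ofReal_mul_I _)
  haveI : IsFiniteMeasure (volume.restrict (Ioc (-b) 0)) :=
    ⟨by rw [Measure.restrict_apply_univ]; exact measure_Ioc_lt_top⟩
  haveI : IsFiniteMeasure (volume.restrict (Ioc 0 b)) :=
    ⟨by rw [Measure.restrict_apply_univ]; exact measure_Ioc_lt_top⟩
  haveI : IsFiniteMeasure (volume.restrict (Ioo 0 b)) :=
    ⟨by rw [Measure.restrict_apply_univ]; exact measure_Ioo_lt_top⟩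
  have hint1 : ∀ n : ℤ, IntegrableOn (fun t => E n t * f t) (Ioc (-b) 0) volume :=
    fun n => (hfIocneg.integrable (by norm_num)).bdd_mul (c := (hEbdd n).choose)
      (hEcont n).aestronglyMeasurable (Filter.Eventually.of_forall (hEbdd n).choose_spec)
  have hint2 : ∀ n : ℤ, IntegrableOn (fun t => E n t * f t) (Ioc 0 b) volume :=
    fun n => (hfIoc0b.integrable (by norm_num)).bdd_mul (c := (hEbdd n).choose)
      (hEcont n).aestronglyMeasurable (Filter.Eventually.of_forall (hEbdd n).choose_spec)
  have hintG : ∀ n : ℤ, IntegrableOn (fun t => E n t * G t) (Ioo 0 b) volume :=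
    fun n => (hG.integrable (by norm_num)).bdd_mul (c := (hEbdd n).choose)
      (hEcont n).aestronglyMeasurable (Filter.Eventually.of_forall (hEbdd n).choose_spec)
  have hintG' : ∀ n : ℤ, IntegrableOn (fun t => σ * (E n (-t) * G t)) (Ioo 0 b) volume := by
    intro n
    refine Integrable.const_mul ?_ σ
    exact (hG.integrable (by norm_num)).bdd_mul (c := (hEbdd n).choose)
      ((hEcont n).comp continuous_neg).aestronglyMeasurable
      (Filter.Eventually.of_forall fun t => (hEbdd n).choose_spec (-t))
  -- the key integral computation
  have key : ∀ n : ℤ, ∫ t in Ioc (-b) b, E n t * f t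
      = ∫ t in Ioo 0 b, (E n t + σ * E n (-t)) * G t := by
    intro n
    rw [hsplitset, setIntegral_union (Ioc_disjoint_Ioc_of_le le_rfl) measurableSet_Ioc
      (hint1 n) (hint2 n)]
    have h1 : ∫ t in Ioc (-b) 0, E n t * f t
        = ∫ t in Ioo 0 b, σ * (E n (-t) * G t) := by
      calc ∫ t in Ioc (-b) 0, E n t * f t
          = ∫ t in Ioc (-b) 0,
            (fun u => E n (-u) * (σ * G u)) (-t) := by
            refine setIntegral_congr_fun measurableSet_Ioc fun t ht => ?_
            have hnt : ¬ (0 < t) := not_lt.mpr ht.2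
            simp only [hfdef, hnt, if_false, neg_neg]
        _ = ∫ u in Ico 0 b, E n (-u) * (σ * G u) :=
            hnegmp.integral_comp (Homeomorph.neg ℝ).measurableEmbedding
              (fun u => E n (-u) * (σ * G u))
        _ = ∫ t in Ioo 0 b, σ * (E n (-t) * G t) := by
            rw [hresIco]
            refine setIntegral_congr_fun measurableSet_Ioo fun t ht => ?_
            ring
    have h2 : ∫ t in Ioc 0 b, E n t * f t = ∫ t in Ioo 0 b, E n t * G t := by
      rw [hresIoc]
      refine setIntegral_congr_fun measurableSet_Ioo fun t ht => ?_
      simp [hfdef, ht.1]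
    rw [h1, h2, ← integral_add (hintG' n) (hintG n)]
    refine setIntegral_congr_fun measurableSet_Ioo fun t ht => ?_
    ring
  -- rewrite fourier monomials
  have hbC : (b : ℂ) ≠ 0 := Complex.ofReal_ne_zero.mpr (ne_of_gt hbpos)
  have hfour : ∀ (n : ℤ) (t : ℝ), (fourier (-n) (t : AddCircle T) : ℂ) = E n t := by
    intro n t
    rw [fourier_coe_apply, hEdef]
    congr 1
    push_cast [hTdef]
    field_simp
  have h0 : ∀ n : ℤ, ∫ t in Ioc (-b) (-b + T),
      (fourier (-n) (t : AddCircle T) : ℂ) * f t = 0 := by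
    intro n
    have hvan' : ∫ t in Ioo 0 b, (E n t + σ * E n (-t)) * G t = 0 := by
      rw [← hvan n]
      refine setIntegral_congr_fun measurableSet_Ioo fun t ht => ?_
      have harg : -(π / b * (n : ℝ) * (-t)) = π / b * (n : ℝ) * t := by ring
      simp only [hEdef, harg]
    rw [hIocT]
    simp_rw [hfour n]
    rw [key n, hvan']
  have hmaster := master (-b) f hfsm (by rw [hIocT]; exact hfmem) h0
  rw [hIocT] at hmaster
  have hres := ae_restrict_of_ae_restrict_of_subset hsub hmaster
  filter_upwards [hres, ae_restrict_mem measurableSet_Ioo] with t h1 h2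
  have : f t = G t := by simp [hfdef, h2.1]
  rw [← this]
  exact h1


/-- The system {(sin(smt), cos(smt))ᵀ}_{s∈ℤ} is an orthogonal basis of
L²(0,b) ⊕ L²(0,b), b = π/m: it is pairwise orthogonal, consists of nonzero
vectors, and is complete. -/
theorem stmt_7 (m : ℕ) (hm : 2 ≤ m) (b : ℝ) (hb : b = π / m) :
    -- pairwise orthogonality
    (∀ s s' : ℤ, s ≠ s' →
      ∫ t in Set.Ioo 0 b,
        ((starRingEnd ℂ) ((Real.sin (s * m * t) : ℝ) : ℂ) * ((Real.sin (s' * m * t) : ℝ) : ℂ)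
          + (starRingEnd ℂ) ((Real.cos (s * m * t) : ℝ) : ℂ) * ((Real.cos (s' * m * t) : ℝ) : ℂ))
        = 0) ∧
    -- each vector is nonzero
    (∀ s : ℤ,
      0 < ∫ t in Set.Ioo 0 b, ((Real.sin (s * m * t)) ^ 2 + (Real.cos (s * m * t)) ^ 2)) ∧
    -- completeness
    (∀ g₁ g₂ : ℝ → ℂ,
      MemLp g₁ 2 (volume.restrict (Set.Ioo 0 b)) →
      MemLp g₂ 2 (volume.restrict (Set.Ioo 0 b)) →
      (∀ s : ℤ,
        ∫ t in Set.Ioo 0 b,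
          ((starRingEnd ℂ) ((Real.sin (s * m * t) : ℝ) : ℂ) * g₁ t
            + (starRingEnd ℂ) ((Real.cos (s * m * t) : ℝ) : ℂ) * g₂ t) = 0) →
      (∀ᵐ t ∂(volume.restrict (Set.Ioo 0 b)), g₁ t = 0) ∧
      (∀ᵐ t ∂(volume.restrict (Set.Ioo 0 b)), g₂ t = 0)) := by
  have hm0 : (m : ℝ) ≠ 0 := by positivity
  have hbpos : 0 < b := by rw [hb]; positivity
  have hπb : π / b = (m : ℝ) := by rw [hb]; field_simp
  refine ⟨?_, ?_, ?_⟩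
  · intro s s' hss
    have key : ∀ t : ℝ,
        (starRingEnd ℂ) ((Real.sin (s * m * t) : ℝ) : ℂ) * ((Real.sin (s' * m * t) : ℝ) : ℂ)
          + (starRingEnd ℂ) ((Real.cos (s * m * t) : ℝ) : ℂ) * ((Real.cos (s' * m * t) : ℝ) : ℂ)
        = ((Real.cos (((s : ℝ) - s') * m * t) : ℝ) : ℂ) := by
      intro t
      rw [Complex.conj_ofReal, Complex.conj_ofReal]
      have : ((s : ℝ) - s') * m * t = (s * m * t) - (s' * m * t) := by ring
      rw [this, Real.cos_sub]
      push_cast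
      ring
    simp_rw [key]
    have hcast : ∫ (t : ℝ) in Ioo 0 b, ((Real.cos (((s:ℝ) - s') * m * t) : ℝ) : ℂ)
        = ((∫ (t : ℝ) in Ioo 0 b, Real.cos (((s:ℝ) - s') * m * t) : ℝ) : ℂ) := integral_ofReal
    rw [hcast]
    norm_cast
    set K : ℤ := (s - s') * (m : ℤ) with hK
    have hK0 : (K : ℝ) ≠ 0 := by
      have : K ≠ 0 := mul_ne_zero (sub_ne_zero_of_ne hss) (by exact_mod_cast (by omega : m ≠ 0))
      exact_mod_cast this
    rw [Measure.restrict_congr_set Ioo_ae_eq_Ioc, ← intervalIntegral.integral_of_le hbpos.le]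
    have hcm : ∀ t : ℝ, Real.cos ((K : ℝ) * t) = Real.cos (t * K) := fun t => by rw [mul_comm]
    simp_rw [hcm]
    rw [intervalIntegral.integral_comp_mul_right Real.cos hK0]
    have hkb : b * K = (K : ℝ) * π / m := by rw [hb]; ring
    have hKm : (K : ℝ) * π / m = ((s - s' : ℤ) : ℝ) * π := by
      rw [hK]; push_cast; field_simp
    rw [integral_cos, zero_mul, hkb, hKm, Real.sin_int_mul_pi, Real.sin_zero,
      sub_zero, smul_zero]
  · intro s
    simp_rw [Real.sin_sq_add_cos_sq]
    rw [setIntegral_const, smul_eq_mul, mul_one, Measure.real, Real.volume_Ioo, sub_zero,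
      ENNReal.toReal_ofReal hbpos.le]
    exact hbpos
  · intro g₁ g₂ hg₁ hg₂ hglobal
    haveI : IsFiniteMeasure (volume.restrict (Ioo 0 b)) :=
      ⟨by rw [Measure.restrict_apply_univ]; exact measure_Ioo_lt_top⟩
    have hg₁i : Integrable g₁ (volume.restrict (Ioo 0 b)) := hg₁.integrable (by norm_num)
    have hg₂i : Integrable g₂ (volume.restrict (Ioo 0 b)) := hg₂.integrable (by norm_num)
    have hsinc : ∀ s : ℤ, Continuous fun t : ℝ => ((Real.sin (s * m * t) : ℝ) : ℂ) := by
      intro s; exact Complex.continuous_ofReal.comp (Real.continuous_sin.comp (by continuity))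
    have hcosc : ∀ s : ℤ, Continuous fun t : ℝ => ((Real.cos (s * m * t) : ℝ) : ℂ) := by
      intro s; exact Complex.continuous_ofReal.comp (Real.continuous_cos.comp (by continuity))
    have hsint : ∀ s : ℤ, IntegrableOn
        (fun t => ((Real.sin (s * m * t) : ℝ) : ℂ) * g₁ t) (Ioo 0 b) volume := by
      intro s
      refine hg₁i.bdd_mul (c := 1) (hsinc s).aestronglyMeasurable (Filter.Eventually.of_forall fun t => ?_)
      rw [Complex.norm_real, Real.norm_eq_abs]
      exact Real.abs_sin_le_one _
    have hcost : ∀ s : ℤ, IntegrableOn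
        (fun t => ((Real.cos (s * m * t) : ℝ) : ℂ) * g₂ t) (Ioo 0 b) volume := by
      intro s
      refine hg₂i.bdd_mul (c := 1) (hcosc s).aestronglyMeasurable (Filter.Eventually.of_forall fun t => ?_)
      rw [Complex.norm_real, Real.norm_eq_abs]
      exact Real.abs_cos_le_one _
    have hAB : ∀ s : ℤ, (∫ t in Ioo 0 b, ((Real.sin (s * m * t) : ℝ) : ℂ) * g₁ t)
        + (∫ t in Ioo 0 b, ((Real.cos (s * m * t) : ℝ) : ℂ) * g₂ t) = 0 := by
      intro s
      have h := hglobal s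
      simp_rw [Complex.conj_ofReal] at h
      rwa [integral_add (hsint s) (hcost s)] at h
    have hAneg : ∀ s : ℤ, (∫ t in Ioo 0 b, ((Real.sin ((-s : ℤ) * m * t) : ℝ) : ℂ) * g₁ t)
        = -(∫ t in Ioo 0 b, ((Real.sin (s * m * t) : ℝ) : ℂ) * g₁ t) := by
      intro s
      rw [← integral_neg]
      refine setIntegral_congr_fun measurableSet_Ioo fun t ht => ?_
      have : ((-s : ℤ) : ℝ) * m * t = -((s : ℝ) * m * t) := by push_cast; ring
      rw [this, Real.sin_neg]
      push_cast
      ring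
    have hBneg : ∀ s : ℤ, (∫ t in Ioo 0 b, ((Real.cos ((-s : ℤ) * m * t) : ℝ) : ℂ) * g₂ t)
        = (∫ t in Ioo 0 b, ((Real.cos (s * m * t) : ℝ) : ℂ) * g₂ t) := by
      intro s
      refine setIntegral_congr_fun measurableSet_Ioo fun t ht => ?_
      have : ((-s : ℤ) : ℝ) * m * t = -((s : ℝ) * m * t) := by push_cast; ring
      rw [this, Real.cos_neg]
    have hA : ∀ s : ℤ, (∫ t in Ioo 0 b, ((Real.sin (s * m * t) : ℝ) : ℂ) * g₁ t) = 0 := by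
      intro s
      have h1 := hAB s
      have h2 := hAB (-s)
      rw [hAneg s, hBneg s] at h2
      linear_combination (h1 - h2) / 2
    have hB : ∀ s : ℤ, (∫ t in Ioo 0 b, ((Real.cos (s * m * t) : ℝ) : ℂ) * g₂ t) = 0 := by
      intro s
      have h1 := hAB s
      have h2 := hAB (-s)
      rw [hAneg s, hBneg s] at h2
      linear_combination (h1 + h2) / 2
    -- strongly measurable representatives
    set G₁ : ℝ → ℂ := hg₁.1.mk g₁ with hG₁def
    set G₂ : ℝ → ℂ := hg₂.1.mk g₂ with hG₂def
    have hG₁ae : g₁ =ᵐ[volume.restrict (Ioo 0 b)] G₁ := hg₁.1.ae_eq_mk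
    have hG₂ae : g₂ =ᵐ[volume.restrict (Ioo 0 b)] G₂ := hg₂.1.ae_eq_mk
    have hG₁sm : StronglyMeasurable G₁ := hg₁.1.stronglyMeasurable_mk
    have hG₂sm : StronglyMeasurable G₂ := hg₂.1.stronglyMeasurable_mk
    have hG₁ : MemLp G₁ 2 (volume.restrict (Ioo 0 b)) := hg₁.ae_eq hG₁ae
    have hG₂ : MemLp G₂ 2 (volume.restrict (Ioo 0 b)) := hg₂.ae_eq hG₂ae
    constructor
    · -- g₁
      have hvan : ∀ n : ℤ, ∫ t in Ioo 0 b,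
          (Complex.exp (((-(π / b * n * t)) : ℝ) * Complex.I)
            + (-1 : ℂ) * Complex.exp (((π / b * n * t) : ℝ) * Complex.I)) * G₁ t = 0 := by
        intro n
        have hker : ∀ t : ℝ,
            Complex.exp (((-(π / b * n * t)) : ℝ) * Complex.I)
              + (-1 : ℂ) * Complex.exp (((π / b * n * t) : ℝ) * Complex.I)
            = (-2 * Complex.I) * ((Real.sin ((n : ℝ) * m * t) : ℝ) : ℂ) := by
          intro t
          have h1 : π / b * (n : ℝ) * t = (n : ℝ) * m * t := by rw [hπb]; ring
          rw [h1, Complex.exp_mul_I, Complex.exp_mul_I]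
          simp only [Complex.ofReal_neg, Complex.cos_neg, Complex.sin_neg,
            ← Complex.ofReal_sin]
          ring
        have hzero : ∫ t in Ioo 0 b, ((Real.sin ((n : ℝ) * m * t) : ℝ) : ℂ) * G₁ t = 0 := by
          rw [← hA n]
          refine integral_congr_ae ?_
          filter_upwards [hG₁ae] with t ht
          rw [ht]
        calc ∫ t in Ioo 0 b,
              (Complex.exp (((-(π / b * n * t)) : ℝ) * Complex.I)
                + (-1 : ℂ) * Complex.exp (((π / b * n * t) : ℝ) * Complex.I)) * G₁ t
            = ∫ t in Ioo 0 b,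
              (-2 * Complex.I) * (((Real.sin ((n : ℝ) * m * t) : ℝ) : ℂ) * G₁ t) := by
              refine setIntegral_congr_fun measurableSet_Ioo fun t ht => ?_
              rw [hker t]; ring
          _ = (-2 * Complex.I) * ∫ t in Ioo 0 b,
              ((Real.sin ((n : ℝ) * m * t) : ℝ) : ℂ) * G₁ t := integral_const_mul _ _
          _ = 0 := by rw [hzero, mul_zero]
      have hfinal := oddEven hbpos (-1 : ℂ) G₁ hG₁sm hG₁ hvan
      filter_upwards [hfinal, hG₁ae] with t h1 h2
      rw [h2]
      exact h1
    · -- g₂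
      have hvan : ∀ n : ℤ, ∫ t in Ioo 0 b,
          (Complex.exp (((-(π / b * n * t)) : ℝ) * Complex.I)
            + (1 : ℂ) * Complex.exp (((π / b * n * t) : ℝ) * Complex.I)) * G₂ t = 0 := by
        intro n
        have hker : ∀ t : ℝ,
            Complex.exp (((-(π / b * n * t)) : ℝ) * Complex.I)
              + (1 : ℂ) * Complex.exp (((π / b * n * t) : ℝ) * Complex.I)
            = (2 : ℂ) * ((Real.cos ((n : ℝ) * m * t) : ℝ) : ℂ) := by
          intro t
          have h1 : π / b * (n : ℝ) * t = (n : ℝ) * m * t := by rw [hπb]; ring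
          rw [h1, Complex.exp_mul_I, Complex.exp_mul_I]
          simp only [Complex.ofReal_neg, Complex.cos_neg, Complex.sin_neg,
            ← Complex.ofReal_cos]
          ring
        have hzero : ∫ t in Ioo 0 b, ((Real.cos ((n : ℝ) * m * t) : ℝ) : ℂ) * G₂ t = 0 := by
          rw [← hB n]
          refine integral_congr_ae ?_
          filter_upwards [hG₂ae] with t ht
          rw [ht]
        calc ∫ t in Ioo 0 b,
              (Complex.exp (((-(π / b * n * t)) : ℝ) * Complex.I)
                + (1 : ℂ) * Complex.exp (((π / b * n * t) : ℝ) * Complex.I)) * G₂ t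
            = ∫ t in Ioo 0 b,
              (2 : ℂ) * (((Real.cos ((n : ℝ) * m * t) : ℝ) : ℂ) * G₂ t) := by
              refine setIntegral_congr_fun measurableSet_Ioo fun t ht => ?_
              rw [hker t]; ring
          _ = (2 : ℂ) * ∫ t in Ioo 0 b,
              ((Real.cos ((n : ℝ) * m * t) : ℝ) : ℂ) * G₂ t := integral_const_mul _ _
          _ = 0 := by rw [hzero, mul_zero]
      have hfinal := oddEven hbpos (1 : ℂ) G₂ hG₂sm hG₂ hvan
      filter_upwards [hfinal, hG₂ae] with t h1 h2
      rw [h2]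
      exact h1
end

section
/- Let b > 0, let w₁, w₂ ∈ L²(0, b), and set Δ(λ) = sin(λb) + ∫₀ᵇ (w₁(t) sin(λt) + w₂(t) cos(λt)) dt. Let h₁, h₂ ∈ L²(0, b) and H(λ) = ∫₀ᵇ (h₁(t) sin(λt) + h₂(t) cos(λt)) dt. If H(λ)/Δ(λ) extends to an entire function that is bounded on ℂ, then H ≡ 0. -/
open MeasureTheory Real Set

/-- Δ(λ) = sin(λb) + ∫₀ᵇ (w₁ sin(λt) + w₂ cos(λt)) dt as an entire function. -/
noncomputable def Delta (b : ℝ) (w₁ w₂ : ℝ → ℂ) (lam : ℂ) : ℂ :=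
  Complex.sin (lam * b) +
    ∫ t in Set.Ioo 0 b, (w₁ t * Complex.sin (lam * t) + w₂ t * Complex.cos (lam * t))

/-- H(λ) = ∫₀ᵇ (h₁ sin(λt) + h₂ cos(λt)) dt as an entire function. -/
noncomputable def Hfun (b : ℝ) (h₁ h₂ : ℝ → ℂ) (lam : ℂ) : ℂ :=
  ∫ t in Set.Ioo 0 b, (h₁ t * Complex.sin (lam * t) + h₂ t * Complex.cos (lam * t))

open Filter

lemma RL {b : ℝ} (h : ℝ → ℂ) :
    Tendsto (fun x : ℝ => ∫ t in Ioo 0 b, h t * Complex.exp (x * t * Complex.I))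
      (cocompact ℝ) (nhds 0) := by
  have h2π : ((-(2*π))⁻¹ : ℝ) ≠ 0 := by simp [Real.pi_ne_zero]
  have hmap : Tendsto (fun x : ℝ => (-(2*π))⁻¹ * x) (cocompact ℝ) (cocompact ℝ) :=
    (Homeomorph.mulLeft₀ _ h2π).isClosedEmbedding.tendsto_cocompact
  have key := (Real.tendsto_integral_exp_smul_cocompact
      ((Ioo (0:ℝ) b).indicator h)).comp hmap
  simp only [Function.comp_def] at key
  have heq : (fun x : ℝ => ∫ v : ℝ, Real.fourierChar (-(v * ((-(2*π))⁻¹ * x))) •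
      (Ioo (0:ℝ) b).indicator h v)
      = fun x : ℝ => ∫ t in Ioo 0 b, h t * Complex.exp (x * t * Complex.I) := by
    ext x
    rw [← integral_indicator measurableSet_Ioo]
    congr 1
    ext v
    by_cases hv : v ∈ Ioo (0:ℝ) b
    · rw [Set.indicator_of_mem hv, Set.indicator_of_mem hv, Circle.smul_def,
        Real.fourierChar_apply, smul_eq_mul]
      have harg : ((2 * π * -(v * ((-(2*π))⁻¹ * x))) : ℝ) = x * v := by
        field_simp
      rw [harg]
      push_cast
      ring
    · simp [Set.indicator_of_notMem hv]
  rw [heq] at key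
  exact key

lemma normExpI (x t : ℝ) : ‖Complex.exp (x * t * Complex.I)‖ = 1 := by
  have : (x : ℂ) * t * Complex.I = ((x*t : ℝ) : ℂ) * Complex.I := by push_cast; ring
  rw [this, Complex.norm_exp_ofReal_mul_I]

lemma intExp {b : ℝ} {h : ℝ → ℂ} (hi : IntegrableOn h (Ioo 0 b)) (x : ℝ) :
    IntegrableOn (fun t => h t * Complex.exp (x * t * Complex.I)) (Ioo 0 b) := by
  refine (Integrable.bdd_mul hi (c := 1)
    (f := fun t : ℝ => Complex.exp (x * t * Complex.I)) ?_ ?_).congr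
    (Eventually.of_forall fun t => mul_comm _ _)
  · exact (Complex.continuous_exp.comp (by continuity)).aestronglyMeasurable
  · exact Eventually.of_forall fun t => le_of_eq (normExpI x t)

lemma intExpNeg {b : ℝ} {h : ℝ → ℂ} (hi : IntegrableOn h (Ioo 0 b)) (x : ℝ) :
    IntegrableOn (fun t => h t * Complex.exp (-x * t * Complex.I)) (Ioo 0 b) := by
  have h2 := intExp hi (-x); push_cast at h2; exact h2

lemma RLneg {b : ℝ} (h : ℝ → ℂ) :
    Tendsto (fun x : ℝ => ∫ t in Ioo 0 b, h t * Complex.exp (-x * t * Complex.I))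
      (cocompact ℝ) (nhds 0) := by
  have hneg : Tendsto (fun x : ℝ => -x) (cocompact ℝ) (cocompact ℝ) :=
    (Homeomorph.neg ℝ).isClosedEmbedding.tendsto_cocompact
  have key := (RL (b := b) h).comp hneg
  simp only [Function.comp_def] at key
  refine key.congr fun x => ?_
  congr 1
  ext t
  push_cast
  ring_nf

lemma pointSin (c z : ℂ) : c * Complex.sin z =
    Complex.I/2 * (c * Complex.exp (-z * Complex.I))
      - Complex.I/2 * (c * Complex.exp (z * Complex.I)) := by
  rw [Complex.exp_mul_I, Complex.exp_mul_I, Complex.sin_neg, Complex.cos_neg]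
  linear_combination (c * Complex.sin z) * Complex.I_sq

lemma pointCos (c z : ℂ) : c * Complex.cos z =
    (1/2 : ℂ) * (c * Complex.exp (z * Complex.I))
      + (1/2 : ℂ) * (c * Complex.exp (-z * Complex.I)) := by
  rw [Complex.exp_mul_I, Complex.exp_mul_I, Complex.sin_neg, Complex.cos_neg]
  ring

lemma RLsin {b : ℝ} {h : ℝ → ℂ} (hi : IntegrableOn h (Ioo 0 b)) :
    Tendsto (fun x : ℝ => ∫ t in Ioo 0 b, h t * Complex.sin (x * t))
      (cocompact ℝ) (nhds 0) := by
  have heq : (fun x : ℝ => ∫ t in Ioo 0 b, h t * Complex.sin (x * t))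
      = fun x : ℝ => (Complex.I/2) * (∫ t in Ioo 0 b, h t * Complex.exp (-x * t * Complex.I))
        - (Complex.I/2) * (∫ t in Ioo 0 b, h t * Complex.exp (x * t * Complex.I)) := by
    ext x
    rw [← integral_const_mul, ← integral_const_mul, ← integral_sub
      ((intExpNeg hi x).const_mul _) ((intExp hi x).const_mul _)]
    refine integral_congr_ae (Eventually.of_forall fun t => ?_)
    simpa only [neg_mul] using pointSin (h t) ((x : ℂ) * t)
  rw [heq]
  have h1 := (RLneg (b := b) h).const_mul (Complex.I/2)
  have h2 := (RL (b := b) h).const_mul (Complex.I/2)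
  simpa using h1.sub h2

lemma RLcos {b : ℝ} {h : ℝ → ℂ} (hi : IntegrableOn h (Ioo 0 b)) :
    Tendsto (fun x : ℝ => ∫ t in Ioo 0 b, h t * Complex.cos (x * t))
      (cocompact ℝ) (nhds 0) := by
  have heq : (fun x : ℝ => ∫ t in Ioo 0 b, h t * Complex.cos (x * t))
      = fun x : ℝ => (1/2 : ℂ) * (∫ t in Ioo 0 b, h t * Complex.exp (x * t * Complex.I))
        + (1/2 : ℂ) * (∫ t in Ioo 0 b, h t * Complex.exp (-x * t * Complex.I)) := by
    ext x
    rw [← integral_const_mul, ← integral_const_mul, ← integral_add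
      ((intExp hi x).const_mul _) ((intExpNeg hi x).const_mul _)]
    refine integral_congr_ae (Eventually.of_forall fun t => ?_)
    simpa only [neg_mul] using pointCos (h t) ((x : ℂ) * t)
  rw [heq]
  have h1 := (RL (b := b) h).const_mul (1/2 : ℂ)
  have h2 := (RLneg (b := b) h).const_mul (1/2 : ℂ)
  simpa using h1.add h2

lemma intSin {b : ℝ} {h : ℝ → ℂ} (hi : IntegrableOn h (Ioo 0 b)) (x : ℝ) :
    IntegrableOn (fun t => h t * Complex.sin (x * t)) (Ioo 0 b) := by
  have : (fun t : ℝ => h t * Complex.sin (x * t))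
      = fun t => Complex.I/2 * (h t * Complex.exp (-x * t * Complex.I))
        - Complex.I/2 * (h t * Complex.exp (x * t * Complex.I)) := by
    ext t; simpa only [neg_mul] using pointSin (h t) ((x : ℂ) * t)
  rw [this]
  exact ((intExpNeg hi x).const_mul _).sub ((intExp hi x).const_mul _)

lemma intCos {b : ℝ} {h : ℝ → ℂ} (hi : IntegrableOn h (Ioo 0 b)) (x : ℝ) :
    IntegrableOn (fun t => h t * Complex.cos (x * t)) (Ioo 0 b) := by
  have : (fun t : ℝ => h t * Complex.cos (x * t))
      = fun t => (1/2 : ℂ) * (h t * Complex.exp (x * t * Complex.I))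
        + (1/2 : ℂ) * (h t * Complex.exp (-x * t * Complex.I)) := by
    ext t; simpa only [neg_mul] using pointCos (h t) ((x : ℂ) * t)
  rw [this]
  exact ((intExp hi x).const_mul _).add ((intExpNeg hi x).const_mul _)

lemma RLsum {b : ℝ} {h₁ h₂ : ℝ → ℂ} (hi₁ : IntegrableOn h₁ (Ioo 0 b))
    (hi₂ : IntegrableOn h₂ (Ioo 0 b)) :
    Tendsto (fun x : ℝ =>
        ∫ t in Ioo 0 b, (h₁ t * Complex.sin (x * t) + h₂ t * Complex.cos (x * t)))
      (cocompact ℝ) (nhds 0) := by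
  have heq : (fun x : ℝ =>
      ∫ t in Ioo 0 b, (h₁ t * Complex.sin (x * t) + h₂ t * Complex.cos (x * t)))
      = fun x : ℝ => (∫ t in Ioo 0 b, h₁ t * Complex.sin (x * t))
        + ∫ t in Ioo 0 b, h₂ t * Complex.cos (x * t) := by
    ext x
    exact integral_add (intSin hi₁ x) (intCos hi₂ x)
  rw [heq]
  simpa using (RLsin hi₁).add (RLcos hi₂)

theorem stmt_10 (b : ℝ) (hb : 0 < b) (w₁ w₂ h₁ h₂ : ℝ → ℂ)
    (hw₁ : MemLp w₁ 2 (volume.restrict (Set.Ioo 0 b)))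
    (hw₂ : MemLp w₂ 2 (volume.restrict (Set.Ioo 0 b)))
    (hh₁ : MemLp h₁ 2 (volume.restrict (Set.Ioo 0 b)))
    (hh₂ : MemLp h₂ 2 (volume.restrict (Set.Ioo 0 b)))
    (F : ℂ → ℂ) (hF : Differentiable ℂ F) (hFbdd : ∃ C : ℝ, ∀ z : ℂ, ‖F z‖ ≤ C)
    (hquot : ∀ z : ℂ, Hfun b h₁ h₂ z = F z * Delta b w₁ w₂ z) :
    ∀ z : ℂ, Hfun b h₁ h₂ z = 0 := by
  -- F is constant by Liouville
  obtain ⟨M, hM⟩ := hFbdd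
  obtain ⟨C, hC⟩ := hF.exists_const_forall_eq_of_bounded
    (isBounded_iff_forall_norm_le.2 ⟨M, by rintro _ ⟨z, rfl⟩; exact hM z⟩)
  -- integrability
  haveI : IsFiniteMeasure (volume.restrict (Ioo (0:ℝ) b)) := by
    constructor
    rw [Measure.restrict_apply_univ, Real.volume_Ioo]
    exact ENNReal.ofReal_lt_top
  have hi₁ : IntegrableOn h₁ (Ioo 0 b) := hh₁.integrable one_le_two
  have hi₂ : IntegrableOn h₂ (Ioo 0 b) := hh₂.integrable one_le_two
  have hiw₁ : IntegrableOn w₁ (Ioo 0 b) := hw₁.integrable one_le_two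
  have hiw₂ : IntegrableOn w₂ (Ioo 0 b) := hw₂.integrable one_le_two
  -- H → 0 along cocompact reals
  have hH : Tendsto (fun x : ℝ => Hfun b h₁ h₂ x) (cocompact ℝ) (nhds 0) :=
    RLsum hi₁ hi₂
  have hD : Tendsto (fun x : ℝ => Delta b w₁ w₂ x - Complex.sin ((x : ℂ) * b))
      (cocompact ℝ) (nhds 0) := by
    have := RLsum hiw₁ hiw₂
    refine this.congr fun x => ?_
    simp [Delta]
  -- the sequence xₙ = (π/2 + n·2π)/b
  set u : ℕ → ℝ := fun n => (π/2 + n * (2*π)) / b with hu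
  have hutop : Tendsto u atTop atTop := by
    apply Tendsto.atTop_div_const hb
    apply tendsto_atTop_add_const_left
    exact tendsto_natCast_atTop_atTop.atTop_mul_const (by positivity)
  have hucc : Tendsto u atTop (cocompact ℝ) :=
    hutop.mono_right (by rw [cocompact_eq_atBot_atTop]; exact le_sup_right)
  have hsin : ∀ n : ℕ, Complex.sin ((u n : ℂ) * b) = 1 := by
    intro n
    have harg : u n * b = π/2 + n * (2*π) := by
      rw [hu]; field_simp
    rw [← Complex.ofReal_mul, harg, ← Complex.ofReal_sin,
      Real.sin_add_nat_mul_two_pi, Real.sin_pi_div_two, Complex.ofReal_one]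
  -- Delta(u n) → 1
  have hDu : Tendsto (fun n : ℕ => Delta b w₁ w₂ (u n)) atTop (nhds 1) := by
    have h0 := hD.comp hucc
    have := h0.add (tendsto_const_nhds (x := (1 : ℂ)))
    rw [zero_add] at this
    refine this.congr fun n => ?_
    simp only [Function.comp_apply, hsin n]
    ring
  -- H(u n) → 0, and H(u n) = C * Delta(u n) → C
  have hHu : Tendsto (fun n : ℕ => Hfun b h₁ h₂ (u n)) atTop (nhds 0) := hH.comp hucc
  have hHu' : Tendsto (fun n : ℕ => Hfun b h₁ h₂ (u n)) atTop (nhds C) := by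
    have := hDu.const_mul C
    rw [mul_one] at this
    refine this.congr fun n => ?_
    rw [hquot, hC]
  have hC0 : C = 0 := tendsto_nhds_unique hHu' hHu
  intro z
  rw [hquot z, hC z, hC0, zero_mul]
end
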